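/- Suppose s = 0 and P⁺ ≠ P⁻. Then there is no trajectory of the standing-wave system for the quantum hydrodynamics model with linear viscosity connecting [P⁻,0] to [P⁺,0]; that is, there is no C² function P : ℝ → (0,∞) satisfying P''(y) = (2/k²) f(P(y)) + (P'(y))²/P(y) for all y ∈ ℝ together with P(y) → P⁻, P'(y) → 0 as y → -∞ and P(y) → P⁺, P'(y) → 0 as y → +∞. -/

import Mathlib

open Real Filter Set MeasureTheory

private lemma strictConvexOn_congr_aux {s : Set ℝ} {f g : ℝ → ℝ}
    (h : StrictConvexOn ℝ s f) (he : ∀ x ∈ s, f x = g x) : StrictConvexOn ℝ s g := by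
  refine ⟨h.1, fun x hx y hy hxy a b ha hb hab => ?_⟩
  have hmem : a • x + b • y ∈ s := h.1 hx hy ha.le hb.le hab
  rw [← he x hx, ← he y hy, ← he _ hmem]
  exact h.2 hx hy hxy ha hb hab

private lemma strictConvexOn_const_mul_aux {s : Set ℝ} {f : ℝ → ℝ}
    (h : StrictConvexOn ℝ s f) {c : ℝ} (hc : 0 < c) :
    StrictConvexOn ℝ s (fun x => c * f x) := by
  refine ⟨h.1, fun x hx y hy hxy a b ha hb hab => ?_⟩
  have key := h.2 hx hy hxy ha hb hab
  simp only [smul_eq_mul] at key ⊢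
  nlinarith

/-- Non-existence of heteroclinic connections for the standing-wave (`s = 0`) system of
the QHD model with linear viscosity, when `P⁺ ≠ P⁻`. -/
theorem no_heteroclinic_linear_viscosity
    (γ k Pp Pm Jp Jm : ℝ)
    (hγ : 1 ≤ γ) (hk : 0 < k) (hPp : 0 < Pp) (hPm : 0 < Pm)
    (hRH1 : Jp - Jm = 0)
    (hRH2 : (Jp ^ 2 / Pp + Pp ^ γ) - (Jm ^ 2 / Pm + Pm ^ γ) = 0)
    (hne : Pp ≠ Pm)
    (A B : ℝ) (hA : A = -Jp) (hB : B = Jp ^ 2 / Pp + Pp ^ γ)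
    (f : ℝ → ℝ) (hf : ∀ P : ℝ, 0 < P → f P = P ^ γ - B + A ^ 2 / P) :
    ¬ ∃ P : ℝ → ℝ, ContDiff ℝ 2 P ∧ (∀ y, 0 < P y) ∧
      (∀ y, deriv (deriv P) y = (2 / k ^ 2) * f (P y) + (deriv P y) ^ 2 / P y) ∧
      Tendsto P atBot (nhds Pm) ∧ Tendsto (deriv P) atBot (nhds 0) ∧
      Tendsto P atTop (nhds Pp) ∧ Tendsto (deriv P) atTop (nhds 0) := by
  rintro ⟨P, hC2, hpos, hODE, hPmT, hPm'T, hPpT, hPp'T⟩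
  -- basic abbreviations
  set φ : ℝ → ℝ := fun p => p ^ γ - B + A ^ 2 / p with hφdef
  set g : ℝ → ℝ := fun t => (2 / k ^ 2) * ((t ^ γ - B + A ^ 2 / t) / t ^ 2) with hgdef
  set W : ℝ → ℝ := fun p => ∫ t in (1:ℝ)..p, g t with hWdef
  have hk2 : (k : ℝ) ≠ 0 := ne_of_gt hk
  have hJ : Jm = Jp := by linarith
  have hφPp : φ Pp = 0 := by
    simp only [hφdef, hB, hA, neg_sq]
    ring
  have hφPm : φ Pm = 0 := by
    have hBm : B = Jp ^ 2 / Pm + Pm ^ γ := by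
      rw [hB]; rw [hJ] at hRH2; linarith
    simp only [hφdef, hBm, hA, neg_sq]
    ring
  -- continuity of g on (0, ∞)
  have hgc : ContinuousOn g (Ioi 0) := by
    intro t ht
    have ht0 : (t : ℝ) ≠ 0 := ne_of_gt ht
    apply ContinuousAt.continuousWithinAt
    have h1 : ContinuousAt (fun t : ℝ => t ^ γ) t :=
      Real.continuousAt_rpow_const t γ (Or.inl ht0)
    have hnum : ContinuousAt (fun t : ℝ => t ^ γ - B + A ^ 2 / t) t :=
      (h1.sub continuousAt_const).add (continuousAt_const.div continuousAt_id ht0)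
    exact continuousAt_const.mul (hnum.div (continuousAt_id.pow 2) (pow_ne_zero 2 ht0))
  -- FTC: derivative of W
  have hW : ∀ p : ℝ, 0 < p → HasDerivAt W (g p) p := by
    intro p hp
    have hsub : uIcc (1:ℝ) p ⊆ Ioi 0 := by
      intro x hx
      rw [Set.mem_uIcc] at hx
      rcases hx with h | h
      · exact lt_of_lt_of_le one_pos h.1
      · exact lt_of_lt_of_le hp h.1
    have hint : IntervalIntegrable g volume 1 p :=
      (hgc.mono hsub).intervalIntegrable
    exact intervalIntegral.integral_hasDerivAt_right hint
      (hgc.stronglyMeasurableAtFilter isOpen_Ioi p hp)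
      (hgc.continuousAt (Ioi_mem_nhds hp))
  -- regularity of P
  rw [show (2 : WithTop ℕ∞) = 1 + 1 by norm_num] at hC2
  obtain ⟨hPdiff, -, hC1⟩ := contDiff_succ_iff_deriv.mp hC2
  have hudiff : Differentiable ℝ (deriv P) := hC1.differentiable one_ne_zero
  -- the conserved quantity
  set H : ℝ → ℝ := fun y => (deriv P y / P y) ^ 2 / 2 - W (P y) with hHdef
  have hH : ∀ y, HasDerivAt H 0 y := by
    intro y
    have hPy := hpos y
    have hPy0 : P y ≠ 0 := ne_of_gt hPy
    have hP : HasDerivAt P (deriv P y) y := (hPdiff y).hasDerivAt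
    have hu : HasDerivAt (deriv P)
        ((2 / k ^ 2) * φ (P y) + (deriv P y) ^ 2 / P y) y := by
      have h0 := (hudiff y).hasDerivAt
      rwa [hODE y, hf (P y) hPy] at h0
    have hv : HasDerivAt (fun y => deriv P y / P y)
        ((((2 / k ^ 2) * φ (P y) + (deriv P y) ^ 2 / P y) * P y
          - deriv P y * deriv P y) / (P y) ^ 2) y := hu.div hP hPy0
    have hsq := (hv.pow 2).div_const 2
    have hWc : HasDerivAt (fun y => W (P y)) (g (P y) * deriv P y) y :=
      (hW (P y) hPy).comp y hP
    have hfin := hsq.sub hWc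
    refine hfin.congr_deriv ?_
    simp only [hφdef, hgdef]
    field_simp
    linear_combination (4 * deriv P y * A ^ 2 + 4 * P y * deriv P y * P y ^ γ - 4 * P y * deriv P y * B) * mul_inv_cancel₀ hPy0
  have hconst := is_const_of_deriv_eq_zero (fun y => (hH y).differentiableAt)
    (fun y => (hH y).deriv)
  -- limits at ±∞
  have hlim : ∀ (l : Filter ℝ) (Q : ℝ) (hQ : 0 < Q), l.NeBot →
      Tendsto P l (nhds Q) → Tendsto (deriv P) l (nhds 0) → H 0 = -W Q := by
    intro l Q hQ hl hPQ hP'Q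
    have h1 : Tendsto (fun y => deriv P y / P y) l (nhds (0 / Q)) :=
      hP'Q.div hPQ (ne_of_gt hQ)
    have h2 : Tendsto (fun y => (deriv P y / P y) ^ 2 / 2) l
        (nhds ((0 / Q) ^ 2 / 2)) := (h1.pow 2).div_const 2
    have h3 : Tendsto (fun y => W (P y)) l (nhds (W Q)) :=
      ((hW Q hQ).continuousAt.tendsto).comp hPQ
    have h4 : Tendsto H l (nhds ((0 / Q) ^ 2 / 2 - W Q)) := h2.sub h3
    have h5 : Tendsto H l (nhds (H 0)) :=
      (tendsto_congr fun y => hconst y 0).mpr tendsto_const_nhds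
    have := tendsto_nhds_unique h5 h4
    rw [this]
    norm_num
  have hWp : H 0 = -W Pp := hlim atTop Pp hPp atTop_neBot hPpT hPp'T
  have hWm : H 0 = -W Pm := hlim atBot Pm hPm atBot_neBot hPmT hPm'T
  have hWW : W Pp = W Pm := by linarith
  -- the contradiction, via the definite sign of φ between the end states
  have key : ∀ a b : ℝ, 0 < a → a < b → φ a = 0 → φ b = 0 → W a = W b → False := by
    intro a b ha hab hfa hfb hWab
    have hb : 0 < b := lt_trans ha hab
    -- nondegeneracy
    have hdeg : A ≠ 0 ∨ 1 < γ := by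
      by_contra hcon
      push_neg at hcon
      obtain ⟨hA0, hγ1⟩ := hcon
      have hγe : γ = 1 := le_antisymm hγ1 hγ
      have ea : a - B = 0 := by
        have := hfa
        simpa [hφdef, hγe, hA0, Real.rpow_one] using this
      have eb : b - B = 0 := by
        have := hfb
        simpa [hφdef, hγe, hA0, Real.rpow_one] using this
      linarith
    -- strict convexity of φ on (0, ∞)
    have hsc : StrictConvexOn ℝ (Ioi 0) φ := by
      rcases hdeg with hA0 | hγ'
      · have h1 : ConvexOn ℝ (Ioi 0) (fun p : ℝ => p ^ γ) :=
          (convexOn_rpow hγ).subset (Ioi_subset_Ici le_rfl) (convex_Ioi 0)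
        have h2 : StrictConvexOn ℝ (Ioi 0) (fun p : ℝ => A ^ 2 * p ^ (-1:ℤ)) :=
          strictConvexOn_const_mul_aux
            (strictConvexOn_zpow (by decide) (by decide)) (by positivity)
        have h3 := (h1.add_strictConvexOn h2).add_const (-B)
        refine strictConvexOn_congr_aux h3 (fun x hx => ?_)
        have hx0 : (x:ℝ) ≠ 0 := ne_of_gt hx
        simp only [hφdef, Pi.add_apply, zpow_neg, zpow_one]
        field_simp
        ring
      · have h1 : StrictConvexOn ℝ (Ioi 0) (fun p : ℝ => p ^ γ) :=
          (strictConvexOn_rpow hγ').subset (Ioi_subset_Ici le_rfl) (convex_Ioi 0)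
        have h2 : ConvexOn ℝ (Ioi 0) (fun p : ℝ => A ^ 2 • p ^ (-1:ℤ)) :=
          ((strictConvexOn_zpow (by decide) (by decide)).convexOn).smul (sq_nonneg A)
        have h3 := (h2.add_strictConvexOn h1).add_const (-B)
        refine strictConvexOn_congr_aux h3 (fun x hx => ?_)
        have hx0 : (x:ℝ) ≠ 0 := ne_of_gt hx
        simp only [hφdef, Pi.add_apply, smul_eq_mul, zpow_neg, zpow_one]
        field_simp
        ring
    -- strict negativity of φ on (a, b)
    have hneg : ∀ x ∈ Ioo a b, φ x < 0 := by
      intro x hx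
      obtain ⟨hax, hxb⟩ := hx
      have hba : 0 < b - a := by linarith
      set s := (b - x) / (b - a) with hsdef
      set t := (x - a) / (b - a) with htdef
      have hs : 0 < s := div_pos (by linarith) hba
      have ht : 0 < t := div_pos (by linarith) hba
      have hst : s + t = 1 := by
        rw [hsdef, htdef]; field_simp; ring
      have hcomb : s • a + t • b = x := by
        simp only [smul_eq_mul, hsdef, htdef]
        field_simp
        ring
      have hlt := hsc.2 (mem_Ioi.mpr ha) (mem_Ioi.mpr hb) (ne_of_lt hab) hs ht hst
      rw [hcomb, hfa, hfb] at hlt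
      simpa using hlt
    -- integral computation
    have hsub : uIcc a b ⊆ Ioi 0 := by
      intro x hx
      rw [Set.mem_uIcc] at hx
      rcases hx with h | h
      · exact lt_of_lt_of_le ha h.1
      · exact lt_of_lt_of_le hb h.1
    have hsub1 : ∀ c : ℝ, 0 < c → uIcc (1:ℝ) c ⊆ Ioi 0 := by
      intro c hc x hx
      rw [Set.mem_uIcc] at hx
      rcases hx with h | h
      · exact lt_of_lt_of_le one_pos h.1
      · exact lt_of_lt_of_le hc h.1
    have hint : IntervalIntegrable g volume a b := (hgc.mono hsub).intervalIntegrable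
    have hint1a : IntervalIntegrable g volume 1 a :=
      (hgc.mono (hsub1 a ha)).intervalIntegrable
    have hint1b : IntervalIntegrable g volume 1 b :=
      (hgc.mono (hsub1 b hb)).intervalIntegrable
    have hWba : W b - W a = ∫ t in a..b, g t :=
      intervalIntegral.integral_interval_sub_left hint1b hint1a
    have hz : (∫ t in a..b, g t) = 0 := by rw [← hWba, hWab]; ring
    have hposint : 0 < ∫ t in a..b, -g t := by
      apply intervalIntegral.intervalIntegral_pos_of_pos_on hint.neg _ hab
      intro x hx
      have hφx := hneg x hx
      have hx0 : 0 < x := lt_trans ha hx.1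
      have hc : 0 < 2 / k ^ 2 := by positivity
      have hq : (x ^ γ - B + A ^ 2 / x) / x ^ 2 < 0 := by
        apply div_neg_of_neg_of_pos _ (by positivity)
        simpa [hφdef] using hφx
      simp only [hgdef, Pi.neg_apply, neg_pos]
      exact mul_neg_of_pos_of_neg hc hq
    rw [intervalIntegral.integral_neg, hz] at hposint
    simp at hposint
  rcases hne.lt_or_gt with h | h
  · exact key Pp Pm hPp h hφPp hφPm hWW
  · exact key Pm Pp hPm h hφPm hφPp hWW.symm
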